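/- Let (Ω, 𝔉, ℙ) be a probability space with a filtration (𝔉_k)_{k≥0}, let β ∈ (0,1) and θ_min > 0. Let (T_k)_{k≥0} be events with T_k ∈ 𝔉_k and ℙ(T_k | 𝔉_{k−1}) ≥ β almost surely for all k ≥ 1 (and ℙ(T_0) ≥ β), and let (Θ_k)_{k≥0} be real random variables with Θ_k ≥ θ_min, where Θ_k is 𝔉_{k−1}-measurable for k ≥ 1 and Θ_0 is constant. If Σ_{k≥0} 1_{T_k}/Θ_k < +∞ almost surely, then Σ_{k≥0} (1 − 1_{T_k})/Θ_k < +∞ almost surely; in particular Σ_{k≥0} 1/Θ_k < +∞ almost surely. -/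

import Mathlib

open Filter MeasureTheory

/-- If the events `T k` have conditional probability at least `β` given the
past and the `𝔉_{k−1}`-measurable random variables `Θ k` are bounded below by
`θmin > 0`, then almost-sure finiteness of `∑ 1_{T k}/Θ k` implies
almost-sure finiteness of `∑ (1 − 1_{T k})/Θ k`, hence of `∑ 1/Θ k`. -/
theorem summable_off_event {Ω : Type*} {mΩ : MeasurableSpace Ω}
    (μ : Measure Ω) [IsProbabilityMeasure μ]
    (𝔉 : Filtration ℕ mΩ) (β : ℝ) (hβ : β ∈ Set.Ioo (0 : ℝ) 1)
    (θmin : ℝ) (hθmin : 0 < θmin)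
    (T : ℕ → Set Ω) (hTmeas : ∀ k, MeasurableSet[𝔉 k] (T k))
    (hT0 : ENNReal.ofReal β ≤ μ (T 0))
    (hcond : ∀ k, 1 ≤ k →
      ∀ᵐ ω ∂μ, β ≤ (μ[(T k).indicator (fun _ => (1 : ℝ)) | 𝔉 (k - 1)]) ω)
    (Θ : ℕ → Ω → ℝ) (hΘmin : ∀ k ω, θmin ≤ Θ k ω)
    (hΘmeas : ∀ k, 1 ≤ k → Measurable[𝔉 (k - 1)] (Θ k))
    (hΘ0 : ∀ ω ω', Θ 0 ω = Θ 0 ω')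
    (hsum : ∀ᵐ ω ∂μ,
      Summable (fun k => (T k).indicator (fun _ => (1 : ℝ)) ω / Θ k ω)) :
    ∀ᵐ ω ∂μ,
      Summable (fun k => (1 - (T k).indicator (fun _ => (1 : ℝ)) ω) / Θ k ω) ∧
        Summable (fun k => 1 / Θ k ω) := by
  obtain ⟨hβ0, hβ1⟩ := hβ
  set X : ℕ → Ω → ℝ := fun k ω => (T k).indicator (fun _ => (1 : ℝ)) ω / Θ k ω with hXdef
  have hΘpos : ∀ k ω, 0 < Θ k ω := fun k ω => lt_of_lt_of_le hθmin (hΘmin k ω)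
  have hind0 : ∀ k (ω : Ω), 0 ≤ (T k).indicator (fun _ => (1 : ℝ)) ω := fun k ω =>
    Set.indicator_nonneg (fun _ _ => zero_le_one) ω
  have hind1 : ∀ k (ω : Ω), (T k).indicator (fun _ => (1 : ℝ)) ω ≤ 1 := fun k ω =>
    Set.indicator_le' (fun _ _ => le_refl 1) (fun _ _ => zero_le_one) ω
  have hXnonneg : ∀ k ω, 0 ≤ X k ω := fun k ω =>
    div_nonneg (hind0 k ω) (hΘpos k ω).le
  have hXle : ∀ k ω, X k ω ≤ θmin⁻¹ := by
    intro k ω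
    have : X k ω ≤ 1 / θmin :=
      div_le_div₀ zero_le_one (hind1 k ω) hθmin (hΘmin k ω)
    simpa [one_div] using this
  -- the adapted process of partial sums of `X (k+1)`
  have hXmeas : ∀ k : ℕ, StronglyMeasurable[𝔉 (k + 1)] (X (k + 1)) := by
    intro k
    have hT' : Measurable[𝔉 (k + 1)] ((T (k + 1)).indicator (fun _ => (1 : ℝ))) :=
      measurable_const.indicator (hTmeas (k + 1))
    have hΘ' : Measurable[𝔉 (k + 1)] (Θ (k + 1)) :=
      (hΘmeas (k + 1) (by omega)).mono (𝔉.mono (by omega)) le_rfl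
    exact (hT'.div hΘ').stronglyMeasurable
  set f : ℕ → Ω → ℝ := fun n ω => ∑ k ∈ Finset.range n, X (k + 1) ω with hfdef
  have hfsum : ∀ n, f n = ∑ k ∈ Finset.range n, X (k + 1) := by
    intro n; funext ω; simp [hfdef]
  have hadapted : StronglyAdapted 𝔉 f := by
    intro n
    rw [hfsum]
    exact Finset.stronglyMeasurable_sum _ fun k hk =>
      (hXmeas k).mono (𝔉.mono (Finset.mem_range.1 hk))
  have hXint : ∀ k : ℕ, Integrable (X (k + 1)) μ := by
    intro k
    refine Integrable.mono' (integrable_const θmin⁻¹)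
      ((hXmeas k).mono (𝔉.le _)).aestronglyMeasurable
      (Eventually.of_forall fun ω => ?_)
    rw [Real.norm_eq_abs, abs_of_nonneg (hXnonneg _ _)]
    exact hXle _ _
  have hint : ∀ n, Integrable (f n) μ := by
    intro n
    rw [hfsum]
    exact integrable_finset_sum' _ fun k _ => hXint k
  have hmono : ∀ᵐ ω ∂μ, ∀ n, f n ω ≤ f (n + 1) ω := by
    refine Eventually.of_forall fun ω n => ?_
    simp only [hfdef, Finset.sum_range_succ]
    exact le_add_of_nonneg_right (hXnonneg _ _)
  have hbdd : ∀ᵐ ω ∂μ, ∀ n, |f (n + 1) ω - f n ω| ≤ ((θmin⁻¹.toNNReal : NNReal) : ℝ) := by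
    refine Eventually.of_forall fun ω n => ?_
    have h1 : f (n + 1) ω - f n ω = X (n + 1) ω := by
      simp [hfdef, Finset.sum_range_succ]
    rw [h1, abs_of_nonneg (hXnonneg _ _),
      Real.coe_toNNReal _ (by positivity : (0:ℝ) ≤ θmin⁻¹)]
    exact hXle _ _
  have hiff := tendsto_sum_indicator_atTop_iff hmono hadapted hint hbdd
  -- identify the predictable part
  have hpred : ∀ n ω, predictablePart f 𝔉 μ n ω
      = ∑ k ∈ Finset.range n, (μ[X (k + 1) | 𝔉 k]) ω := by
    intro n ω
    rw [predictablePart, Finset.sum_apply]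
    refine Finset.sum_congr rfl fun k _ => ?_
    congr 1
    funext ω'
    simp [hfdef, Finset.sum_range_succ]
  -- lower bound the conditional expectations
  have hce : ∀ k : ℕ, (μ[X (k + 1) | 𝔉 k]) =ᵐ[μ]
      fun ω => (Θ (k + 1) ω)⁻¹ * (μ[(T (k + 1)).indicator (fun _ => (1 : ℝ)) | 𝔉 k]) ω := by
    intro k
    have hΘm : StronglyMeasurable[𝔉 k] (fun ω => (Θ (k + 1) ω)⁻¹) :=
      ((hΘmeas (k + 1) (by omega)).inv).stronglyMeasurable
    have hg : Integrable ((T (k + 1)).indicator (fun _ => (1 : ℝ))) μ :=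
      (integrable_const (1 : ℝ)).indicator (𝔉.le _ _ (hTmeas (k + 1)))
    have hkey : (fun ω => (Θ (k + 1) ω)⁻¹) * ((T (k + 1)).indicator fun _ => (1 : ℝ))
        = X (k + 1) := by
      funext ω
      simp [hXdef, div_eq_mul_inv, mul_comm]
    have hfg : Integrable ((fun ω => (Θ (k + 1) ω)⁻¹)
        * ((T (k + 1)).indicator fun _ => (1 : ℝ))) μ := by
      rw [hkey]; exact hXint k
    have h := condExp_mul_of_stronglyMeasurable_left hΘm hfg hg
    rw [hkey] at h
    exact h
  have hlb : ∀ᵐ ω ∂μ, ∀ k : ℕ, β * (Θ (k + 1) ω)⁻¹ ≤ (μ[X (k + 1) | 𝔉 k]) ω := by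
    rw [ae_all_iff]
    intro k
    have hc := hcond (k + 1) (by omega)
    simp only [Nat.add_sub_cancel] at hc
    filter_upwards [hce k, hc] with ω h1 h2
    rw [h1]
    have hnn : (0 : ℝ) ≤ (Θ (k + 1) ω)⁻¹ := inv_nonneg.2 (hΘpos _ _).le
    calc β * (Θ (k + 1) ω)⁻¹ = (Θ (k + 1) ω)⁻¹ * β := mul_comm _ _
      _ ≤ _ := mul_le_mul_of_nonneg_left h2 hnn
  filter_upwards [hsum, hiff, hlb] with ω hsumω hiffω hlbω
  have hS : Summable (fun k => (Θ (k + 1) ω)⁻¹) := by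
    rw [summable_iff_not_tendsto_nat_atTop_of_nonneg
      (fun k => inv_nonneg.2 (hΘpos _ _).le)]
    intro hT'
    have h1 : Tendsto (fun n => β * ∑ k ∈ Finset.range n, (Θ (k + 1) ω)⁻¹) atTop atTop :=
      hT'.const_mul_atTop hβ0
    have h2 : Tendsto (fun n => predictablePart f 𝔉 μ n ω) atTop atTop := by
      refine tendsto_atTop_mono (fun n => ?_) h1
      rw [hpred n ω, Finset.mul_sum]
      exact Finset.sum_le_sum fun k _ => hlbω k
    have h3 : Tendsto (fun n => f n ω) atTop atTop := hiffω.2 h2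
    have h4 : Summable (fun k => X (k + 1) ω) := (summable_nat_add_iff 1).2 hsumω
    exact (summable_iff_not_tendsto_nat_atTop_of_nonneg
      (fun k => hXnonneg _ _)).1 h4 h3
  have hS0 : Summable (fun k => (Θ k ω)⁻¹) := (summable_nat_add_iff 1).1 hS
  have hS1 : Summable (fun k => 1 / Θ k ω) := by simpa [one_div] using hS0
  refine ⟨Summable.of_nonneg_of_le (fun k => ?_) (fun k => ?_) hS1, hS1⟩
  · exact div_nonneg (sub_nonneg.2 (hind1 k ω)) (hΘpos k ω).le
  · gcongr
    · exact (hΘpos k ω).le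
    · exact sub_le_self _ (hind0 k ω)
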